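/- Let $G$ be a finite group and $\pi : A(G) \to G$ the unique group homomorphism with $\pi \circ \varphi_G = \mathrm{id}_G$. Then the derived (commutator) subgroup of $A(G)$ is finite. -/

import Mathlib

open Rack Subgroup
open scoped commutatorElement

private lemma envel_gen {G : Type*} [Group G] (x : EnvelGroup (Quandle.Conj G)) :
    x ∈ Subgroup.closure (Set.range (toEnvelGroup (Quandle.Conj G))) := by
  induction x using Quotient.inductionOn with
  | h a =>
    induction a with
    | unit => exact Subgroup.one_mem _
    | incl g => exact Subgroup.subset_closure ⟨g, rfl⟩
    | mul a b ha hb =>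
      have h : (⟦a.mul b⟧ : EnvelGroup (Quandle.Conj G)) =
          @Mul.mul (EnvelGroup (Quandle.Conj G)) _ ⟦a⟧ ⟦b⟧ := rfl
      rw [h]; exact Subgroup.mul_mem _ ha hb
    | inv a ha =>
      have h : (⟦a.inv⟧ : EnvelGroup (Quandle.Conj G)) =
          @Inv.inv (EnvelGroup (Quandle.Conj G)) _ ⟦a⟧ := rfl
      rw [h]; exact Subgroup.inv_mem _ ha

private lemma envel_conj {G : Type*} [Group G]
    (π : Rack.EnvelGroup (Quandle.Conj G) →* G)
    (hπ : ∀ g : G, π (Rack.toEnvelGroup (Quandle.Conj G) g) = g)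
    (x : EnvelGroup (Quandle.Conj G)) (g : G) :
    x * toEnvelGroup (Quandle.Conj G) g * x⁻¹ =
      toEnvelGroup (Quandle.Conj G) (π x * g * (π x)⁻¹) := by
  revert g
  induction envel_gen x using Subgroup.closure_induction with
  | mem y hy =>
    obtain ⟨h, rfl⟩ := hy
    intro g
    have := (toEnvelGroup (Quandle.Conj G)).map_act' (x := h) (y := g)
    rw [Quandle.conj_act_eq_conj] at this
    rw [hπ h]
    exact this.symm
  | one => intro g; simp
  | mul a b _ _ ha hb =>
    intro g
    have key : a * (b * toEnvelGroup (Quandle.Conj G) g * b⁻¹) * a⁻¹ =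
        toEnvelGroup (Quandle.Conj G) (π a * (π b * g * (π b)⁻¹) * (π a)⁻¹) := by
      rw [hb g, ha _]
    rw [show π (a * b) * g * (π (a * b))⁻¹ = π a * (π b * g * (π b)⁻¹) * (π a)⁻¹ by
      rw [map_mul]; group]
    rw [← key]
    group
  | inv a _ ha =>
    intro g
    have := ha (π a⁻¹ * g * (π a⁻¹)⁻¹)
    have h2 : π a * (π a⁻¹ * g * (π a⁻¹)⁻¹) * (π a)⁻¹ = g := by
      simp only [map_inv]; group
    rw [h2] at this
    calc a⁻¹ * toEnvelGroup (Quandle.Conj G) g * (a⁻¹)⁻¹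
        = a⁻¹ * (a * toEnvelGroup (Quandle.Conj G) (π a⁻¹ * g * (π a⁻¹)⁻¹) * a⁻¹) * a := by
          rw [this]; group
      _ = toEnvelGroup (Quandle.Conj G) (π a⁻¹ * g * (π a⁻¹)⁻¹) := by group

private lemma comm_cent {A : Type*} [Group A] {a b za zb : A}
    (hza : za ∈ Subgroup.center A) (hzb : zb ∈ Subgroup.center A) :
    ⁅a * za, b * zb⁆ = ⁅a, b⁆ := by
  have conj : ∀ z ∈ Subgroup.center A, ∀ c w : A, (c * z) * w * (c * z)⁻¹ = c * w * c⁻¹ := by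
    intro z hz c w
    have h : z * w = w * z := (Subgroup.mem_center_iff.mp hz w).symm
    rw [mul_inv_rev]
    calc c * z * w * (z⁻¹ * c⁻¹) = c * (z * w) * z⁻¹ * c⁻¹ := by group
      _ = c * (w * z) * z⁻¹ * c⁻¹ := by rw [h]
      _ = c * w * c⁻¹ := by group
  have hzb' : a⁻¹ * zb = zb * a⁻¹ := Subgroup.mem_center_iff.mp hzb a⁻¹
  calc ⁅a * za, b * zb⁆
      = ((a * za) * (b * zb) * (a * za)⁻¹) * (b * zb)⁻¹ := by
        exact commutatorElement_def _ _
    _ = (a * (b * zb) * a⁻¹) * (zb⁻¹ * b⁻¹) := by rw [conj za hza a (b * zb), mul_inv_rev]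
    _ = a * b * (zb * a⁻¹ * zb⁻¹) * b⁻¹ := by group
    _ = a * b * (a⁻¹ * zb * zb⁻¹) * b⁻¹ := by rw [← hzb']
    _ = ⁅a, b⁆ := by rw [commutatorElement_def]; group

theorem stmt13 {G : Type*} [Group G] [Finite G]
    (π : Rack.EnvelGroup (Quandle.Conj G) →* G)
    (hπ : ∀ g : G, π (Rack.toEnvelGroup (Quandle.Conj G) g) = g) :
    Finite (commutator (Rack.EnvelGroup (Quandle.Conj G))) := by
  set A := Rack.EnvelGroup (Quandle.Conj G)
  -- ker π ≤ center A
  have hker : π.ker ≤ Subgroup.center A := by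
    intro k hk
    rw [Subgroup.mem_center_iff]
    intro x
    have hcomm : ∀ y ∈ Set.range (toEnvelGroup (Quandle.Conj G)), Commute y k := by
      rintro y ⟨g, rfl⟩
      have := envel_conj π hπ k g
      rw [MonoidHom.mem_ker.mp hk] at this
      simp only [one_mul, inv_one, mul_one] at this
      unfold Commute SemiconjBy
      conv_lhs => rw [← this]
      group
    have : Commute x k := by
      induction envel_gen x using Subgroup.closure_induction with
      | mem y hy => exact hcomm y hy
      | one => exact Commute.one_left k
      | mul a b _ _ ha hb => exact Commute.mul_left ha hb
      | inv a _ ha => exact Commute.inv_left ha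
    exact this
  -- π is surjective, so A ⧸ ker π is finite
  have hsurj : Function.Surjective π := fun g => ⟨toEnvelGroup (Quandle.Conj G) g, hπ g⟩
  have hfin : Finite (A ⧸ π.ker) :=
    Finite.of_equiv G (QuotientGroup.quotientKerEquivOfSurjective π hsurj).symm.toEquiv
  have h1 : π.ker.FiniteIndex := Subgroup.finiteIndex_of_finite_quotient
  have hZ : (Subgroup.center A).FiniteIndex := Subgroup.finiteIndex_of_le hker
  have hfinZ : Finite (A ⧸ Subgroup.center A) := Subgroup.finite_quotient_of_finiteIndex
  -- commutatorSet is finite: it's the image of (A ⧸ Z)²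
  have hset : Finite (commutatorSet A) := by
    have hsub : commutatorSet A ⊆
        (fun p : (A ⧸ Subgroup.center A) × (A ⧸ Subgroup.center A) =>
          ⁅p.1.out, p.2.out⁆) '' Set.univ := by
      rintro c ⟨a, b, rfl⟩
      refine ⟨((a : A ⧸ Subgroup.center A), (b : A ⧸ Subgroup.center A)), trivial, ?_⟩
      obtain ⟨⟨za, hza⟩, ea⟩ := QuotientGroup.mk_out_eq_mul (Subgroup.center A) a
      obtain ⟨⟨zb, hzb⟩, eb⟩ := QuotientGroup.mk_out_eq_mul (Subgroup.center A) b
      show ⁅(QuotientGroup.mk a : A ⧸ Subgroup.center A).out,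
            (QuotientGroup.mk b : A ⧸ Subgroup.center A).out⁆ = ⁅a, b⁆
      rw [ea, eb]
      exact comm_cent hza hzb
    exact Set.Finite.subset (Set.toFinite _) hsub
  exact inferInstance
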